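/- Let T, Ω > 0, let 𝔍(ω) = (ω³/Ω²) e^{−ω/Ω} be the super-Ohmic spectral density with exponential cutoff (s = 3), and define the bath correlation function C(T, 𝔍; t) = ∫_0^∞ 𝔍(ω) [ e^{iωt}/(e^{ω/T} − 1) + e^{−iωt} (1/(e^{ω/T} − 1) + 1) ] dω for t ∈ ℝ. Then C(T, 𝔍; t) = (6 T⁴/Ω²) [ b(4, 1 + T/Ω − iTt) + b(4, T/Ω + iTt) ], where b(z, u) = Σ_{n=0}^∞ (n + u)^{−z} is the generalized (Hurwitz) zeta function; these arguments equal (1 + Ω/T − iΩt)/(Ω/T) and (1 + iΩt)/(Ω/T), respectively, and Γ(4) = 6. -/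

import Mathlib

open MeasureTheory Set Filter

noncomputable section

/-- The super-Ohmic (`s = 3`) spectral density with exponential cutoff,
`𝔍(ω) = ω³/Ω² · e^{−ω/Ω}`. -/
def Jspec (Ω ω : ℝ) : ℝ := ω ^ 3 / Ω ^ 2 * Real.exp (-ω / Ω)

/-- The bath correlation function
`C(T,𝔍;t) = ∫_0^∞ 𝔍(ω)[e^{iωt}/(e^{ω/T}−1) + e^{−iωt}(1/(e^{ω/T}−1)+1)] dω`. -/
def bathCorr (T Ω t : ℝ) : ℂ :=
  ∫ ω in Set.Ioi (0 : ℝ), (Jspec Ω ω : ℂ) *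
    (Complex.exp (Complex.I * (ω : ℂ) * (t : ℂ)) / (Complex.exp ((ω : ℂ) / (T : ℂ)) - 1) +
      Complex.exp (-(Complex.I * (ω : ℂ) * (t : ℂ))) *
        (1 / (Complex.exp ((ω : ℂ) / (T : ℂ)) - 1) + 1))

/-- The generalized (Hurwitz) zeta function `b(z,u) = Σ_{n=0}^∞ (n+u)^{−z}`. -/
def genZeta (z u : ℂ) : ℂ := ∑' k : ℕ, ((k : ℂ) + u) ^ (-z)


lemma integrable_pow3_exp {a : ℂ} (ha : 0 < a.re) :
    IntegrableOn (fun ω : ℝ => (ω : ℂ) ^ 3 * Complex.exp (-(a * ω))) (Set.Ioi 0) := by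
  have hb := integrableOn_rpow_mul_exp_neg_mul_rpow (p := 1) (s := 3) (b := a.re)
    (by norm_num) one_pos ha
  refine Integrable.mono' hb ?_ ?_
  · exact (Continuous.aestronglyMeasurable (by continuity)).restrict
  · filter_upwards [ae_restrict_mem measurableSet_Ioi] with x hx
    have hx0 : (0:ℝ) < x := hx
    rw [norm_mul, Complex.norm_exp]
    simp only [norm_pow, Complex.norm_real, Real.norm_eq_abs, abs_of_pos hx0]
    rw [Real.rpow_one, show ((3:ℝ)) = ((3:ℕ):ℝ) by norm_num, Real.rpow_natCast]
    have : (-(a * ↑x)).re = -(a.re * x) := by simp [Complex.mul_re]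
    rw [this, neg_mul]

lemma tendsto_pow_cexp {a : ℂ} (ha : 0 < a.re) (n : ℕ) :
    Tendsto (fun x : ℝ => (x : ℂ) ^ n * Complex.exp (-(a * x))) atTop (nhds 0) := by
  rw [tendsto_zero_iff_norm_tendsto_zero]
  have h0 : Tendsto (fun x : ℝ => x ^ n * Real.exp (-(a.re * x))) atTop (nhds 0) := by
    have := (Real.tendsto_pow_mul_exp_neg_atTop_nhds_zero n).comp
      (tendsto_id.const_mul_atTop ha)
    have h2 : Tendsto (fun x : ℝ => (a.re)⁻¹ ^ n * ((a.re * x) ^ n * Real.exp (-(a.re * x))))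
        atTop (nhds ((a.re)⁻¹ ^ n * 0)) := this.const_mul _
    rw [mul_zero] at h2
    refine h2.congr' ?_
    filter_upwards with x
    rw [← mul_assoc, ← mul_pow, inv_mul_cancel_left₀ ha.ne']
  refine h0.congr' ?_
  filter_upwards [eventually_ge_atTop 0] with x hx
  rw [norm_mul, Complex.norm_exp]
  simp only [norm_pow, Complex.norm_real, Real.norm_eq_abs, abs_of_nonneg hx]
  congr 2
  simp [Complex.mul_re]

lemma integral_pow3_exp {a : ℂ} (ha : 0 < a.re) :
    ∫ ω in Set.Ioi (0:ℝ), (ω : ℂ) ^ 3 * Complex.exp (-(a * ω)) = 6 / a ^ 4 := by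
  have ha0 : a ≠ 0 := fun h => by simp [h] at ha
  set F : ℝ → ℂ := fun x =>
    -(Complex.exp (-(a * x)) * (a^3 * (x:ℂ)^3 + 3 * a^2 * (x:ℂ)^2 + 6 * a * (x:ℂ) + 6)) / a^4
    with hF
  have hderiv : ∀ x ∈ Ici (0:ℝ), HasDerivAt F ((x:ℂ)^3 * Complex.exp (-(a * x))) x := by
    intro x _
    have hG : HasDerivAt (fun z : ℂ =>
        -(Complex.exp (-(a * z)) * (a^3 * z^3 + 3 * a^2 * z^2 + 6 * a * z + 6)) / a^4)
        ((x:ℂ)^3 * Complex.exp (-(a * x))) (x : ℂ) := by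
      have hexp : HasDerivAt (fun z : ℂ => Complex.exp (-(a * z)))
          (Complex.exp (-(a * (x:ℂ))) * (-a)) (x:ℂ) := by
        simpa using (((hasDerivAt_id (x:ℂ)).const_mul a).neg).cexp
      have hpoly : HasDerivAt (fun z : ℂ => a^3 * z^3 + 3 * a^2 * z^2 + 6 * a * z + 6)
          (3 * a^3 * (x:ℂ)^2 + 6 * a^2 * (x:ℂ) + 6 * a) (x:ℂ) := by
        have h1 := (hasDerivAt_pow 3 (x:ℂ)).const_mul (a^3)
        have h2 := (hasDerivAt_pow 2 (x:ℂ)).const_mul (3 * a^2)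
        have h3 := (hasDerivAt_id (x:ℂ)).const_mul (6 * a)
        have := ((h1.add h2).add h3).add_const (6:ℂ)
        refine this.congr_deriv ?_
        push_cast
        ring
      have := ((hexp.mul hpoly).neg).div_const (a^4)
      refine this.congr_deriv ?_
      field_simp
      ring
    exact hG.comp_ofReal
  have hint := integrable_pow3_exp ha
  have hlim : Tendsto F atTop (nhds 0) := by
    have h3 := (tendsto_pow_cexp ha 3).const_mul (a^3)
    have h2 := (tendsto_pow_cexp ha 2).const_mul (3*a^2)
    have h1 := (tendsto_pow_cexp ha 1).const_mul (6*a)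
    have h0 := (tendsto_pow_cexp ha 0).const_mul (6:ℂ)
    have := ((((h3.add h2).add h1).add h0).neg).div_const (a^4)
    simp only [mul_zero, add_zero, neg_zero, zero_div] at this
    refine this.congr ?_
    intro x
    simp only [hF]
    ring
  have := integral_Ioi_of_hasDerivAt_of_tendsto' hderiv hint hlim
  rw [this]
  simp only [hF]
  norm_num
  rw [neg_div, neg_neg]

lemma integrable_pow3_exp_real {c : ℝ} (hc : 0 < c) :
    IntegrableOn (fun ω : ℝ => ω ^ 3 * Real.exp (-(c * ω))) (Set.Ioi 0) := by
  have hb := integrableOn_rpow_mul_exp_neg_mul_rpow (p := 1) (s := 3) (b := c)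
    (by norm_num) one_pos hc
  have heq : (fun x : ℝ => x ^ (3:ℝ) * Real.exp (-c * x ^ (1:ℝ)))
      = fun x : ℝ => x ^ 3 * Real.exp (-(c * x)) := by
    funext x
    rw [Real.rpow_one, show (3:ℝ) = ((3:ℕ):ℝ) by norm_num, Real.rpow_natCast, neg_mul]
  rwa [heq] at hb

lemma integral_pow3_exp_real {c : ℝ} (hc : 0 < c) :
    ∫ ω in Set.Ioi (0:ℝ), ω ^ 3 * Real.exp (-(c * ω)) = 6 / c ^ 4 := by
  have h := integral_pow3_exp (a := (c:ℂ)) (by simpa using hc)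
  have h2 : ∫ ω in Set.Ioi (0:ℝ), (ω : ℂ) ^ 3 * Complex.exp (-((c:ℂ) * ω))
      = ∫ ω in Set.Ioi (0:ℝ), ((ω ^ 3 * Real.exp (-(c * ω)) : ℝ) : ℂ) := by
    congr 1 with ω
    push_cast [Complex.ofReal_exp]
    ring_nf
  have h3 : (∫ ω in Set.Ioi (0:ℝ), ((ω ^ 3 * Real.exp (-(c * ω)) : ℝ) : ℂ))
      = ((∫ ω in Set.Ioi (0:ℝ), ω ^ 3 * Real.exp (-(c * ω)) : ℝ) : ℂ) := integral_ofReal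
  rw [h2, h3] at h
  exact_mod_cast h

lemma summable_shifted_pseries : Summable (fun k : ℕ => (((k:ℝ) + 1) ^ 4)⁻¹) := by
  have := (summable_nat_add_iff 1).mpr
    (Real.summable_one_div_nat_pow.mpr (by norm_num : 1 < 4))
  refine this.congr fun k => ?_
  push_cast
  rw [one_div]

lemma summable_shift_cpow {u : ℂ} (hu : 0 < u.re) :
    Summable (fun k : ℕ => ((k:ℂ) + u) ^ (-4 : ℂ)) := by
  set m : ℝ := min 1 u.re with hm
  have hm0 : 0 < m := lt_min one_pos hu
  have hbound : Summable (fun k : ℕ => (m⁻¹) ^ 4 * ((((k:ℝ) + 1) ^ 4)⁻¹)) :=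
    summable_shifted_pseries.mul_left _
  refine Summable.of_norm (hbound.of_nonneg_of_le (fun k => norm_nonneg _) fun k => ?_)
  have hre : ((k:ℂ) + u).re = (k:ℝ) + u.re := by simp
  have hrepos : 0 < ((k:ℂ) + u).re := by rw [hre]; positivity
  have hne : ((k:ℂ) + u) ≠ 0 := by
    intro h; rw [h] at hrepos; simp at hrepos
  have hcp : ((k:ℂ) + u) ^ (-4 : ℂ) = (((k:ℂ) + u) ^ (4:ℕ))⁻¹ := by
    rw [show (-4:ℂ) = -((4:ℕ):ℂ) by norm_num, Complex.cpow_neg, Complex.cpow_natCast]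
  rw [hcp, norm_inv, norm_pow]
  have hge : m * ((k:ℝ) + 1) ≤ ‖(k:ℂ) + u‖ := by
    refine le_trans ?_ (hre ▸ Complex.re_le_norm ((k:ℂ) + u))
    have h1 : m ≤ 1 := min_le_left _ _
    have h2 : m ≤ u.re := min_le_right _ _
    nlinarith [Nat.cast_nonneg (α := ℝ) k]
  have hpos : 0 < m * ((k:ℝ) + 1) := by positivity
  calc (‖(k:ℂ) + u‖ ^ 4)⁻¹ ≤ ((m * ((k:ℝ)+1)) ^ 4)⁻¹ := by
        apply inv_anti₀ (by positivity)
        exact pow_le_pow_left₀ hpos.le hge 4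
    _ = m⁻¹ ^ 4 * ((((k:ℝ) + 1) ^ 4)⁻¹) := by
        rw [mul_pow, mul_inv, ← inv_pow]

/-- Closed form of the bath correlation function for the `s = 3`
super-Ohmic spectral density:
`C(T,𝔍;t) = (6T⁴/Ω²)[b(4, 1 + T/Ω − iTt) + b(4, T/Ω + iTt)]`. -/
theorem bathCorr_eq_genZeta (T Ω t : ℝ) (hT : 0 < T) (hΩ : 0 < Ω) :
    bathCorr T Ω t = ((6 * T ^ 4 / Ω ^ 2 : ℝ) : ℂ) *
      (genZeta 4 (1 + (T : ℂ) / (Ω : ℂ) - Complex.I * (T : ℂ) * (t : ℂ)) +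
        genZeta 4 ((T : ℂ) / (Ω : ℂ) + Complex.I * (T : ℂ) * (t : ℂ))) := by
  have hT0 : (T:ℂ) ≠ 0 := by exact_mod_cast hT.ne'
  have hΩ0 : (Ω:ℂ) ≠ 0 := by exact_mod_cast hΩ.ne'
  set u₁ : ℂ := 1 + (T:ℂ)/(Ω:ℂ) - Complex.I * T * t with hu₁
  set u₂ : ℂ := (T:ℂ)/(Ω:ℂ) + Complex.I * T * t with hu₂
  have hu₁re : u₁.re = 1 + T/Ω := by
    simp [hu₁, Complex.div_ofReal_re, Complex.mul_re, Complex.mul_im]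
  have hu₂re : u₂.re = T/Ω := by
    simp [hu₂, Complex.div_ofReal_re, Complex.mul_re, Complex.mul_im]
  set a₁ : ℕ → ℂ := fun k => ((k:ℂ) + u₁)/T with ha₁
  set a₂ : ℕ → ℂ := fun k => ((k:ℂ) + u₂)/T with ha₂
  have hTΩ : 0 < T/Ω := by positivity
  have ha₁re : ∀ k, (a₁ k).re = ((k:ℝ) + (1 + T/Ω))/T := by
    intro k; rw [ha₁]; simp [Complex.div_ofReal_re, hu₁re]
  have ha₂re : ∀ k, (a₂ k).re = ((k:ℝ) + T/Ω)/T := by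
    intro k; rw [ha₂]; simp [Complex.div_ofReal_re, hu₂re]
  have ha₁pos : ∀ k, 0 < (a₁ k).re := by
    intro k; rw [ha₁re k]; positivity
  have ha₂pos : ∀ k, 0 < (a₂ k).re := by
    intro k; rw [ha₂re k]
    have : (0:ℝ) < (k:ℝ) + T/Ω := by positivity
    positivity
  set f : ℕ → ℝ → ℂ := fun k ω => ((Ω:ℂ)^2)⁻¹ *
      ((ω:ℂ)^3 * Complex.exp (-(a₁ k * ω)) + (ω:ℂ)^3 * Complex.exp (-(a₂ k * ω))) with hf
  have hfint : ∀ k, IntegrableOn (f k) (Set.Ioi 0) := fun k =>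
    ((integrable_pow3_exp (ha₁pos k)).add (integrable_pow3_exp (ha₂pos k))).const_mul _
  -- Step 1 : pointwise series expansion
  have hstep1 : bathCorr T Ω t = ∫ ω in Set.Ioi (0:ℝ), ∑' k, f k ω := by
    rw [bathCorr]
    refine setIntegral_congr_fun measurableSet_Ioi (fun ω hω => ?_)
    have hω0 : (0:ℝ) < ω := hω
    set z : ℂ := Complex.exp (-((ω:ℂ)/(T:ℂ))) with hzdef
    have hz : ‖z‖ < 1 := by
      rw [hzdef, Complex.norm_exp]
      have : (-((ω:ℂ)/(T:ℂ))).re = -(ω/T) := by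
        simp [Complex.div_ofReal_re]
      rw [this, Real.exp_lt_one_iff]
      have : (0:ℝ) < ω/T := by positivity
      linarith
    have hz0 : z ≠ 0 := Complex.exp_ne_zero _
    have hgeo : Summable (fun k:ℕ => z^k) := summable_geometric_of_norm_lt_one hz
    have hgeo1 : Summable (fun k:ℕ => z^(k+1)) :=
      (hgeo.mul_right z).congr fun k => (pow_succ z k).symm
    have hzne1 : z ≠ 1 := by intro h; rw [h] at hz; simp at hz
    have h1z : (1:ℂ) - z ≠ 0 := sub_ne_zero.mpr (Ne.symm hzne1)
    have hEz : Complex.exp ((ω:ℂ)/(T:ℂ)) * z = 1 := by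
      rw [hzdef, ← Complex.exp_add]; simp
    have hEne : Complex.exp ((ω:ℂ)/(T:ℂ)) - 1 ≠ 0 := by
      intro h
      have h1 : Complex.exp ((ω:ℂ)/(T:ℂ)) = 1 := by linear_combination h
      rw [h1, one_mul] at hEz
      exact hzne1 hEz
    have hS1 : (Complex.exp ((ω:ℂ)/(T:ℂ)) - 1)⁻¹ = ∑' k:ℕ, z^(k+1) := by
      have hg := tsum_geometric_of_norm_lt_one hz
      have h2 : ∑' k:ℕ, z^(k+1) = z * (1-z)⁻¹ := by
        rw [← hg, ← tsum_mul_left]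
        exact tsum_congr fun k => by rw [pow_succ]; ring
      have h3 : (1:ℂ) - z = (Complex.exp ((ω:ℂ)/(T:ℂ)) - 1) * z := by
        rw [sub_mul, hEz, one_mul]
      rw [h2, h3]
      field_simp
    have hS2 : (Complex.exp ((ω:ℂ)/(T:ℂ)) - 1)⁻¹ + 1 = ∑' k:ℕ, z^k := by
      rw [hS1, Summable.tsum_eq_zero_add hgeo, pow_zero]; ring
    rw [div_eq_mul_inv, one_div, hS2, hS1, mul_comm (Complex.exp (Complex.I * ω * t)),
      ← tsum_mul_right, ← tsum_mul_left,
      ← Summable.tsum_add (hgeo1.mul_right _) (hgeo.mul_left _), ← tsum_mul_left]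
    refine tsum_congr fun k => ?_
    -- pointwise identity
    have hzk1 : z^(k+1) = Complex.exp ((((k+1:ℕ)):ℂ) * (-((ω:ℂ)/(T:ℂ)))) := by
      rw [hzdef, ← Complex.exp_nat_mul]
    have hzk : z^k = Complex.exp (((k:ℕ):ℂ) * (-((ω:ℂ)/(T:ℂ)))) := by
      rw [hzdef, ← Complex.exp_nat_mul]
    have hJ : (Jspec Ω ω : ℂ) = ((ω:ℂ)^3/(Ω:ℂ)^2) * Complex.exp (-(ω:ℂ)/(Ω:ℂ)) := by
      rw [Jspec]; push_cast [Complex.ofReal_exp]; ring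
    have hc1 : Complex.exp (-(ω:ℂ)/(Ω:ℂ)) * (Complex.exp (Complex.I * ω * t) * z^(k+1))
        = Complex.exp (-(a₁ k * ω)) := by
      rw [hzk1, ← Complex.exp_add, ← Complex.exp_add]
      congr 1
      rw [ha₁, hu₁]
      push_cast
      field_simp
      ring
    have hc2 : Complex.exp (-(ω:ℂ)/(Ω:ℂ)) * (Complex.exp (-(Complex.I * ω * t)) * z^k)
        = Complex.exp (-(a₂ k * ω)) := by
      rw [hzk, ← Complex.exp_add, ← Complex.exp_add]
      congr 1
      rw [ha₂, hu₂]
      push_cast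
      field_simp
      ring
    calc (Jspec Ω ω : ℂ) * (z^(k+1) * Complex.exp (Complex.I * ω * t)
          + Complex.exp (-(Complex.I * ω * t)) * z^k)
        = ((ω:ℂ)^3/(Ω:ℂ)^2) *
            (Complex.exp (-(ω:ℂ)/(Ω:ℂ)) * (Complex.exp (Complex.I * ω * t) * z^(k+1))
            + Complex.exp (-(ω:ℂ)/(Ω:ℂ)) * (Complex.exp (-(Complex.I * ω * t)) * z^k)) := by
          rw [hJ]; ring
      _ = f k ω := by rw [hc1, hc2, hf]; ring
  -- summability of the norm integrals
  set m : ℝ := min (1/Ω) (1/T) with hmdef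
  have hm0 : 0 < m := lt_min (by positivity) (by positivity)
  have hmk : ∀ k : ℕ, (0:ℝ) < m * ((k:ℝ)+1) := fun k => by positivity
  have hm1 : m ≤ 1/Ω := min_le_left _ _
  have hm2 : m ≤ 1/T := min_le_right _ _
  have hlow2 : ∀ k : ℕ, m * ((k:ℝ)+1) ≤ (a₂ k).re := by
    intro k
    rw [ha₂re k]
    have e : ((k:ℝ) + T/Ω)/T = (k:ℝ)*(1/T) + 1/Ω := by
      field_simp
    rw [e]
    nlinarith [Nat.cast_nonneg (α := ℝ) k]
  have hlow1 : ∀ k : ℕ, m * ((k:ℝ)+1) ≤ (a₁ k).re := by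
    intro k
    rw [ha₁re k]
    have e : ((k:ℝ) + (1 + T/Ω))/T = ((k:ℝ)+1)*(1/T) + 1/Ω := by field_simp; ring
    rw [e]
    nlinarith [Nat.cast_nonneg (α := ℝ) k, hΩ.le, le_of_lt (show (0:ℝ) < 1/Ω by positivity)]
  have hnormint : ∀ k : ℕ, (∫ ω in Set.Ioi (0:ℝ), ‖f k ω‖)
      ≤ (2/Ω^2) * (6/(m*((k:ℝ)+1))^4) := by
    intro k
    have hintb : IntegrableOn
        (fun ω : ℝ => (2/Ω^2) * (ω^3 * Real.exp (-((m*((k:ℝ)+1)) * ω)))) (Set.Ioi 0) :=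
      (integrable_pow3_exp_real (hmk k)).const_mul _
    have hle : ∀ ω ∈ Set.Ioi (0:ℝ),
        ‖f k ω‖ ≤ (2/Ω^2) * (ω^3 * Real.exp (-((m*((k:ℝ)+1)) * ω))) := by
      intro ω hω
      have hω0 : (0:ℝ) < ω := hω
      have hnorm : ∀ (a : ℂ), ‖(ω:ℂ)^3 * Complex.exp (-(a * ω))‖
          = ω^3 * Real.exp (-(a.re * ω)) := by
        intro a
        rw [norm_mul, norm_pow, Complex.norm_real, Real.norm_eq_abs,
          abs_of_pos hω0, Complex.norm_exp]
        congr 2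
        simp [Complex.mul_re]
      calc ‖f k ω‖ ≤ ‖((Ω:ℂ)^2)⁻¹‖ * (‖(ω:ℂ)^3 * Complex.exp (-(a₁ k * ω))‖
            + ‖(ω:ℂ)^3 * Complex.exp (-(a₂ k * ω))‖) := by
            rw [hf, norm_mul]
            gcongr
            exact norm_add_le _ _
        _ = (Ω^2)⁻¹ * (ω^3 * Real.exp (-((a₁ k).re * ω))
              + ω^3 * Real.exp (-((a₂ k).re * ω))) := by
            rw [hnorm, hnorm, norm_inv, norm_pow, Complex.norm_real,
              Real.norm_eq_abs, abs_of_pos hΩ]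
        _ ≤ (Ω^2)⁻¹ * (ω^3 * Real.exp (-(m*((k:ℝ)+1) * ω))
              + ω^3 * Real.exp (-(m*((k:ℝ)+1) * ω))) := by
            have b1 : Real.exp (-((a₁ k).re * ω)) ≤ Real.exp (-(m*((k:ℝ)+1) * ω)) :=
              Real.exp_le_exp.mpr (neg_le_neg (mul_le_mul_of_nonneg_right (hlow1 k) hω0.le))
            have b2 : Real.exp (-((a₂ k).re * ω)) ≤ Real.exp (-(m*((k:ℝ)+1) * ω)) :=
              Real.exp_le_exp.mpr (neg_le_neg (mul_le_mul_of_nonneg_right (hlow2 k) hω0.le))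
            have hω3 : (0:ℝ) ≤ ω^3 := by positivity
            have hsum := add_le_add (mul_le_mul_of_nonneg_left b1 hω3)
              (mul_le_mul_of_nonneg_left b2 hω3)
            exact mul_le_mul_of_nonneg_left hsum (by positivity)
        _ = (2/Ω^2) * (ω^3 * Real.exp (-((m*((k:ℝ)+1)) * ω))) := by ring
    calc (∫ ω in Set.Ioi (0:ℝ), ‖f k ω‖)
        ≤ ∫ ω in Set.Ioi (0:ℝ), (2/Ω^2) * (ω^3 * Real.exp (-((m*((k:ℝ)+1)) * ω))) :=
          setIntegral_mono_on ((hfint k).norm) hintb measurableSet_Ioi hle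
      _ = (2/Ω^2) * (6/(m*((k:ℝ)+1))^4) := by
          rw [integral_const_mul, integral_pow3_exp_real (hmk k)]
  have hsummable : Summable (fun k : ℕ => ∫ ω in Set.Ioi (0:ℝ), ‖f k ω‖) := by
    have hb : Summable (fun k : ℕ => (12/(Ω^2*m^4)) * ((((k:ℝ)+1)^4)⁻¹)) :=
      summable_shifted_pseries.mul_left _
    refine Summable.of_nonneg_of_le
      (fun k => integral_nonneg fun ω => norm_nonneg _)
      (fun k => le_trans (hnormint k) (le_of_eq ?_)) hb
    have hk1 : ((k:ℝ)+1) ≠ 0 := by positivity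
    field_simp
    ring
  have hswap := integral_tsum_of_summable_integral_norm hfint hsummable
  rw [hstep1, ← hswap]
  -- compute the individual integrals
  have hzero : ∀ (w : ℂ), 0 < w.re → w ≠ 0 := fun w hw h => by rw [h] at hw; simp at hw
  have hw₁ : ∀ k : ℕ, 0 < ((k:ℂ) + u₁).re := by
    intro k
    have : ((k:ℂ) + u₁).re = (k:ℝ) + (1 + T/Ω) := by simp [Complex.add_re, hu₁re]
    rw [this]; positivity
  have hw₂ : ∀ k : ℕ, 0 < ((k:ℂ) + u₂).re := by
    intro k
    have : ((k:ℂ) + u₂).re = (k:ℝ) + T/Ω := by simp [Complex.add_re, hu₂re]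
    rw [this]; positivity
  have hval : ∀ k : ℕ, (∫ ω in Set.Ioi (0:ℝ), f k ω)
      = ((6*T^4/Ω^2 : ℝ):ℂ) * (((k:ℂ)+u₁)^(-4:ℂ) + ((k:ℂ)+u₂)^(-4:ℂ)) := by
    intro k
    simp only [hf]
    rw [integral_const_mul,
      integral_add (integrable_pow3_exp (ha₁pos k)) (integrable_pow3_exp (ha₂pos k)),
      integral_pow3_exp (ha₁pos k), integral_pow3_exp (ha₂pos k)]
    have hcp : ∀ (w : ℂ), w ≠ 0 → 6/(w/(T:ℂ))^4 = 6*(T:ℂ)^4 * w^(-4:ℂ) := by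
      intro w hw
      rw [show (-4:ℂ) = -((4:ℕ):ℂ) by norm_num, Complex.cpow_neg, Complex.cpow_natCast]
      field_simp
      try ring
    simp only [ha₁, ha₂]
    rw [hcp _ (hzero _ (hw₁ k)), hcp _ (hzero _ (hw₂ k))]
    push_cast
    ring
  rw [tsum_congr hval, genZeta, genZeta, tsum_mul_left,
    Summable.tsum_add (summable_shift_cpow (by rw [hu₁re]; positivity))
      (summable_shift_cpow (by rw [hu₂re]; positivity))]
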